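/- arXiv:1908.06720 — 3 statements merged into one kernel-verified Lean document; each statement's English description precedes it below -/
import Mathlib

section
/- For any two block vectors x and y (with the same block structure), the Jordan product satisfies the submultiplicativity property ‖x ∘ y‖_F ≤ ‖x‖₂ · ‖y‖_F. -/
set_option synthInstance.maxHeartbeats 1000000
set_option maxHeartbeats 1000000

noncomputable section
open scoped BigOperators

namespace SOCP

/-- `E k` is `ℝ^(k+1)`, written as `(x₀; x̄)` with `x̄ ∈ ℝ^k`. -/
abbrev E (k : ℕ) := EuclideanSpace ℝ (Fin (k + 1))

/-- Build an element of `E k` from a plain function. -/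
def mk {k : ℕ} (f : Fin (k + 1) → ℝ) : E k := (WithLp.equiv 2 _).symm f

/-- The Euclidean norm `‖x̄‖` of the tail of `x`. -/
def tnorm {k : ℕ} (x : E k) : ℝ := Real.sqrt (∑ i : Fin k, (x i.succ) ^ 2)

/-- First Jordan eigenvalue `λ₁(x) = x₀ + ‖x̄‖`. -/
def lam1 {k : ℕ} (x : E k) : ℝ := x 0 + tnorm x

/-- Second Jordan eigenvalue `λ₂(x) = x₀ − ‖x̄‖`. -/
def lam2 {k : ℕ} (x : E k) : ℝ := x 0 - tnorm x

/-- Jordan product `x ∘ y = (xᵀy; x₀ȳ + y₀x̄)`. -/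
def jmul {k : ℕ} (x y : E k) : E k :=
  mk (fun j => if j = 0 then ∑ i, x i * y i else x 0 * y j + y 0 * x j)

/-- The Jordan identity `e = (1; 0)`. -/
def idE {k : ℕ} : E k := mk (fun j => if j = 0 then 1 else 0)

/-- First Jordan frame vector `c₁(x) = ½(1; x̄/‖x̄‖)`. -/
def c1 {k : ℕ} (x : E k) : E k :=
  mk (fun j => if j = 0 then 1 / 2 else x j / (2 * tnorm x))

/-- Second Jordan frame vector `c₂(x) = ½(1; −x̄/‖x̄‖)`. -/
def c2 {k : ℕ} (x : E k) : E k :=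
  mk (fun j => if j = 0 then 1 / 2 else -x j / (2 * tnorm x))

/-- Arrowhead matrix `Arw(x) = [[x₀, x̄ᵀ], [x̄, x₀ I]]`. -/
def Arw {k : ℕ} (x : E k) : Matrix (Fin (k + 1)) (Fin (k + 1)) ℝ :=
  Matrix.of fun i j =>
    if i = 0 then x j else if j = 0 then x i else if i = j then x 0 else 0

/-- Quadratic representation `Q_x = 2 Arw(x)² − Arw(x ∘ x)`. -/
def Qmat {k : ℕ} (x : E k) : Matrix (Fin (k + 1)) (Fin (k + 1)) ℝ :=
  (2 : ℝ) • (Arw x * Arw x) - Arw (jmul x x)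

/-- Jordan square root `x^{1/2} = √λ₁ c₁ + √λ₂ c₂` (equal to `(√x₀; 0)` when `x̄ = 0`). -/
def jsqrt {k : ℕ} (x : E k) : E k :=
  if tnorm x = 0 then mk (fun j => if j = 0 then Real.sqrt (x 0) else 0)
  else Real.sqrt (lam1 x) • c1 x + Real.sqrt (lam2 x) • c2 x

/-- `T_x := Q_{x^{1/2}}`. -/
def Tmat {k : ℕ} (x : E k) : Matrix (Fin (k + 1)) (Fin (k + 1)) ℝ := Qmat (jsqrt x)

/-- Jordan inverse `x⁻¹ = λ₁⁻¹ c₁ + λ₂⁻¹ c₂` (equal to `(x₀⁻¹; 0)` when `x̄ = 0`). -/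
def jinv {k : ℕ} (x : E k) : E k :=
  if tnorm x = 0 then mk (fun j => if j = 0 then (x 0)⁻¹ else 0)
  else (lam1 x)⁻¹ • c1 x + (lam2 x)⁻¹ • c2 x

/-- Matrix-vector product, as a map on `E k`. -/
def mulVecE {k : ℕ} (M : Matrix (Fin (k + 1)) (Fin (k + 1)) ℝ) (v : E k) : E k :=
  mk (M.mulVec (WithLp.equiv 2 _ v))

/-- Block vectors `x = (x₁; …; x_r)` with `x_i ∈ ℝ^{d i + 2}` (so each block has dim ≥ 2). -/
abbrev BV {r : ℕ} (d : Fin r → ℕ) : Type := (i : Fin r) → E (d i + 1)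

variable {r : ℕ} {d : Fin r → ℕ}

/-- Spectral norm `‖x‖₂ = max_i (|x_{i,0}| + ‖x̄_i‖)`. -/
def specNorm (x : BV d) : ℝ := ⨆ i, (|x i 0| + tnorm (x i))

/-- Frobenius norm `‖x‖_F = √(Σ_i (λ₁(x_i)² + λ₂(x_i)²))`. -/
def frobNorm (x : BV d) : ℝ := Real.sqrt (∑ i, (lam1 (x i) ^ 2 + lam2 (x i) ^ 2))

/-- Minimum Jordan eigenvalue `λ_min(x) = min_i λ₂(x_i)`. -/
def lamMin (x : BV d) : ℝ := ⨅ i, lam2 (x i)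

/-- Blockwise Jordan product. -/
def jmulB (x y : BV d) : BV d := fun i => jmul (x i) (y i)

/-- Block identity element. -/
def idB : BV d := fun _ => idE

/-- Membership in the interior of the product of Lorentz cones: `‖x̄_i‖ < x_{i,0}` for all `i`. -/
def inIntLB (x : BV d) : Prop := ∀ i, tnorm (x i) < x i 0

/-- Euclidean inner product of the concatenated vectors. -/
def ip (x y : BV d) : ℝ := ∑ i, ∑ j, x i j * y i j

/-- Block-diagonal application of `T_x`: `(T_x s)_i = T_{x_i} s_i`. -/
def TB (x s : BV d) : BV d := fun i => mulVecE (Tmat (x i)) (s i)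

/-- Distance from the central path `d(x, s, ν) = ‖T_x s − ν e‖_F`. -/
def cdist (x s : BV d) (ν : ℝ) : ℝ := frobNorm (TB x s - ν • (idB : BV d))

/-- Blockwise Jordan inverse. -/
def jinvB (x : BV d) : BV d := fun i => jinv (x i)



/-- Sum of squares of all coordinates. -/
def nsq {k : ℕ} (x : E k) : ℝ := ∑ i, (x i) ^ 2

lemma tnorm_nonneg {k : ℕ} (x : E k) : 0 ≤ tnorm x := Real.sqrt_nonneg _

lemma tnorm_sq {k : ℕ} (x : E k) : tnorm x ^ 2 = ∑ i : Fin k, (x i.succ) ^ 2 := by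
  rw [tnorm, Real.sq_sqrt]
  exact Finset.sum_nonneg fun i _ => sq_nonneg _

lemma nsq_nonneg {k : ℕ} (x : E k) : 0 ≤ nsq x :=
  Finset.sum_nonneg fun i _ => sq_nonneg _

lemma nsq_eq {k : ℕ} (x : E k) : nsq x = (x 0) ^ 2 + tnorm x ^ 2 := by
  rw [nsq, Fin.sum_univ_succ, tnorm_sq]

lemma lam_sq_sum {k : ℕ} (x : E k) : lam1 x ^ 2 + lam2 x ^ 2 = 2 * nsq x := by
  rw [lam1, lam2, nsq_eq]; ring

lemma mk_apply {k : ℕ} (f : Fin (k + 1) → ℝ) (i : Fin (k + 1)) : mk f i = f i := rfl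

lemma jmul_zero {k : ℕ} (x y : E k) : jmul x y 0 = ∑ i, x i * y i := by
  simp [jmul, mk_apply]

lemma jmul_succ {k : ℕ} (x y : E k) (j : Fin k) :
    jmul x y j.succ = x 0 * y j.succ + y 0 * x j.succ := by
  simp [jmul, mk_apply, Fin.succ_ne_zero]

lemma scalar_key (a b U V s : ℝ) (hU : 0 ≤ U) (hV : 0 ≤ V)
    (h1 : s ≤ U * V) (h2 : -(U * V) ≤ s) :
    (a * b + s) ^ 2 + (a ^ 2 * V ^ 2 + 2 * (a * b * s) + b ^ 2 * U ^ 2) ≤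
      (|a| + U) ^ 2 * (b ^ 2 + V ^ 2) := by
  have ha : 0 ≤ |a| := abs_nonneg a
  have haa : a ≤ |a| := le_abs_self a
  have han : -a ≤ |a| := neg_le_abs a
  have hb : 0 ≤ |b| := abs_nonneg b
  have hbb : b ≤ |b| := le_abs_self b
  have hbn : -b ≤ |b| := neg_le_abs b
  have hbsq : |b| ^ 2 = b ^ 2 := sq_abs b
  have hasq : |a| ^ 2 = a ^ 2 := sq_abs a
  have hab1 : a * b ≤ |a| * |b| := by rw [← abs_mul]; exact le_abs_self _
  have hab2 : -(a * b) ≤ |a| * |b| := by rw [← abs_mul]; exact neg_le_abs _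
  have hsum : 0 ≤ U * V + s := by linarith
  have hdiff : 0 ≤ U * V - s := by linarith
  nlinarith [mul_nonneg (mul_nonneg ha hU) (sq_nonneg (|b| - V)),
    mul_nonneg hdiff hsum,
    mul_nonneg (sub_nonneg.2 hab1) hsum,
    mul_nonneg (sub_nonneg.2 hab2) hdiff,
    mul_nonneg (sub_nonneg.2 hab1) hdiff,
    mul_nonneg (sub_nonneg.2 hab2) hsum]

lemma nsq_jmul_le {k : ℕ} (x y : E k) :
    nsq (jmul x y) ≤ (|x 0| + tnorm x) ^ 2 * nsq y := by
  set a := x 0 with hadef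
  set b := y 0 with hbdef
  set U := tnorm x
  set V := tnorm y
  set s : ℝ := ∑ j : Fin k, x j.succ * y j.succ with hs
  have hU : 0 ≤ U := tnorm_nonneg x
  have hV : 0 ≤ V := tnorm_nonneg y
  have hUsq : U ^ 2 = ∑ j : Fin k, (x j.succ) ^ 2 := tnorm_sq x
  have hVsq : V ^ 2 = ∑ j : Fin k, (y j.succ) ^ 2 := tnorm_sq y
  have hcs : s ^ 2 ≤ (U * V) ^ 2 := by
    rw [mul_pow, hUsq, hVsq, hs]
    exact Finset.sum_mul_sq_le_sq_mul_sq Finset.univ _ _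
  have habs : |s| ≤ U * V := by
    have h := Real.sqrt_le_sqrt hcs
    rwa [Real.sqrt_sq_eq_abs, Real.sqrt_sq (mul_nonneg hU hV)] at h
  have h1 : s ≤ U * V := (abs_le.1 habs).2
  have h2 : -(U * V) ≤ s := (abs_le.1 habs).1
  have hexp : nsq (jmul x y) =
      (a * b + s) ^ 2 + (a ^ 2 * V ^ 2 + 2 * (a * b * s) + b ^ 2 * U ^ 2) := by
    rw [nsq, Fin.sum_univ_succ, jmul_zero, Fin.sum_univ_succ]
    have htail : ∀ j : Fin k, (jmul x y j.succ) ^ 2 =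
        a ^ 2 * (y j.succ) ^ 2 + 2 * (a * b) * (x j.succ * y j.succ)
          + b ^ 2 * (x j.succ) ^ 2 := by
      intro j; rw [jmul_succ]; ring
    rw [Finset.sum_congr rfl fun j _ => htail j]
    rw [Finset.sum_add_distrib, Finset.sum_add_distrib, ← Finset.mul_sum,
      ← Finset.mul_sum, ← Finset.mul_sum, ← hVsq, ← hUsq, ← hs]
    ring
  rw [hexp, nsq_eq y, ← hbdef]
  exact scalar_key a b U V s hU hV h1 h2

lemma specNorm_nonneg {r : ℕ} {d : Fin r → ℕ} (hr : 0 < r) (x : BV d) :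
    0 ≤ specNorm x := by
  have i : Fin r := ⟨0, hr⟩
  have h1 : (0 : ℝ) ≤ |x i 0| + tnorm (x i) :=
    add_nonneg (abs_nonneg _) (tnorm_nonneg _)
  refine h1.trans ?_
  rw [specNorm]
  exact le_ciSup (f := fun j => |x j 0| + tnorm (x j)) (Set.Finite.bddAbove (Set.finite_range _)) i

lemma le_specNorm {r : ℕ} {d : Fin r → ℕ} (x : BV d) (i : Fin r) :
    |x i 0| + tnorm (x i) ≤ specNorm x := by
  rw [specNorm]
  exact le_ciSup (f := fun j => |x j 0| + tnorm (x j)) (Set.Finite.bddAbove (Set.finite_range _)) i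

lemma frobNorm_eq {r : ℕ} {d : Fin r → ℕ} (x : BV d) :
    frobNorm x = Real.sqrt (∑ i, 2 * nsq (x i)) := by
  rw [frobNorm]
  congr 1
  exact Finset.sum_congr rfl fun i _ => lam_sq_sum (x i)

/-- Submultiplicativity of the Jordan product: `‖x ∘ y‖_F ≤ ‖x‖₂ · ‖y‖_F`. -/
theorem frobNorm_jmulB_le {r : ℕ} {d : Fin r → ℕ} (hr : 0 < r) (x y : BV d) :
    frobNorm (jmulB x y) ≤ specNorm x * frobNorm y := by
  have hS : 0 ≤ specNorm x := specNorm_nonneg hr x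
  rw [frobNorm_eq, frobNorm_eq]
  have key : ∑ i, 2 * nsq (jmulB x y i) ≤ specNorm x ^ 2 * ∑ i, 2 * nsq (y i) := by
    rw [Finset.mul_sum]
    refine Finset.sum_le_sum fun i _ => ?_
    have h1 : nsq (jmul (x i) (y i)) ≤ (|x i 0| + tnorm (x i)) ^ 2 * nsq (y i) :=
      nsq_jmul_le (x i) (y i)
    have h2 : (|x i 0| + tnorm (x i)) ^ 2 * nsq (y i) ≤ specNorm x ^ 2 * nsq (y i) := by
      apply mul_le_mul_of_nonneg_right _ (nsq_nonneg _)
      exact pow_le_pow_left₀ (add_nonneg (abs_nonneg _) (tnorm_nonneg _)) (le_specNorm x i) 2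
    calc 2 * nsq (jmulB x y i) ≤ 2 * (specNorm x ^ 2 * nsq (y i)) := by
          simpa [jmulB] using mul_le_mul_of_nonneg_left (h1.trans h2) (by norm_num : (0:ℝ) ≤ 2)
      _ = specNorm x ^ 2 * (2 * nsq (y i)) := by ring
  calc Real.sqrt (∑ i, 2 * nsq (jmulB x y i))
      ≤ Real.sqrt (specNorm x ^ 2 * ∑ i, 2 * nsq (y i)) := Real.sqrt_le_sqrt key
    _ = specNorm x * Real.sqrt (∑ i, 2 * nsq (y i)) := by
        rw [Real.sqrt_mul (sq_nonneg _), Real.sqrt_sq hS]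

end SOCP
end
end

section
/- Let x and s be block vectors of rank r with x, s ∈ int 𝓛, and let ν > 0. Then the duality gap and the distance from the central path satisfy | xᵀs − rν | ≤ √(r/2) · d(x, s, ν), where xᵀs denotes the Euclidean inner product of the concatenated vectors. -/
set_option synthInstance.maxHeartbeats 1000000
set_option maxHeartbeats 1000000

noncomputable section
open scoped BigOperators

namespace SOCP

variable {r : ℕ} {d : Fin r → ℕ}

lemma tail_eq_zero {k : ℕ} (x : E k) (h : tnorm x = 0) (i : Fin k) : x i.succ = 0 := by
  have h2 : ∑ i : Fin k, (x i.succ) ^ 2 = 0 := by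
    have := tnorm_sq x; rw [h] at this; linarith
  have := Finset.sum_eq_zero_iff_of_nonneg (fun i _ => sq_nonneg (x i.succ)) |>.mp h2 i (Finset.mem_univ i)
  exact pow_eq_zero_iff (n := 2) (by norm_num) |>.mp this

lemma jsqrt_sq_sum {k : ℕ} (x : E k) (h : tnorm x < x 0) :
    ∑ j, (jsqrt x j) ^ 2 = x 0 := by
  by_cases ht : tnorm x = 0
  · rw [jsqrt, if_pos ht]
    rw [Fin.sum_univ_succ]
    have : ∀ i : Fin k, ((mk (fun j => if j = 0 then Real.sqrt (x 0) else 0) : E k) i.succ)^2 = 0 := by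
      intro i; show (if (i.succ : Fin (k+1)) = 0 then Real.sqrt (x 0) else 0)^2 = 0
      simp [Fin.succ_ne_zero]
    simp only [this, Finset.sum_const_zero, add_zero]
    show (if (0 : Fin (k+1)) = 0 then Real.sqrt (x 0) else 0)^2 = x 0
    rw [if_pos rfl, Real.sq_sqrt]
    nlinarith [tnorm_nonneg x]
  · have ht0 : 0 < tnorm x := lt_of_le_of_ne (tnorm_nonneg x) (Ne.symm ht)
    have hl1 : 0 ≤ lam1 x := by unfold lam1; nlinarith
    have hl2 : 0 ≤ lam2 x := by unfold lam2; linarith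
    rw [jsqrt, if_neg ht]
    set a := Real.sqrt (lam1 x)
    set b := Real.sqrt (lam2 x)
    have ha : a ^ 2 = lam1 x := Real.sq_sqrt hl1
    have hb : b ^ 2 = lam2 x := Real.sq_sqrt hl2
    have happ : ∀ j : Fin (k+1), (a • c1 x + b • c2 x) j
        = a * (if j = 0 then 1/2 else x j / (2 * tnorm x)) + b * (if j = 0 then 1/2 else -x j / (2 * tnorm x)) := by
      intro j; simp [c1, c2, mk]
    rw [Fin.sum_univ_succ]
    simp only [happ]
    have hz : ∀ i : Fin k, (i.succ : Fin (k+1)) ≠ 0 := fun i => Fin.succ_ne_zero i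
    simp only [if_pos rfl, hz, if_neg (hz _), ite_false]
    have hsum : ∑ i : Fin k,
        (a * (x i.succ / (2 * tnorm x)) + b * (-x i.succ / (2 * tnorm x))) ^ 2
        = ((a - b)/(2 * tnorm x))^2 * ∑ i : Fin k, (x i.succ)^2 := by
      rw [Finset.mul_sum]; apply Finset.sum_congr rfl; intro i _; ring
    rw [hsum, ← tnorm_sq]
    have ht2 : tnorm x ≠ 0 := ht
    have hlam : lam1 x + lam2 x = 2 * x 0 := by unfold lam1 lam2; ring
    simp only [↓reduceIte]
    field_simp
    nlinarith [ha, hb, hlam]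

lemma jsqrt_tail {k : ℕ} (x : E k) (h : tnorm x < x 0) (i : Fin k) :
    2 * jsqrt x 0 * jsqrt x i.succ = x i.succ := by
  by_cases ht : tnorm x = 0
  · rw [jsqrt, if_pos ht]
    have h1 : ((mk (fun j => if j = 0 then Real.sqrt (x 0) else 0) : E k) i.succ) = 0 := by
      show (if (i.succ : Fin (k+1)) = 0 then Real.sqrt (x 0) else 0) = 0
      simp [Fin.succ_ne_zero]
    rw [h1, tail_eq_zero x ht i]; ring
  · have ht0 : 0 < tnorm x := lt_of_le_of_ne (tnorm_nonneg x) (Ne.symm ht)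
    have hl1 : 0 ≤ lam1 x := by unfold lam1; nlinarith
    have hl2 : 0 ≤ lam2 x := by unfold lam2; linarith
    rw [jsqrt, if_neg ht]
    set a := Real.sqrt (lam1 x)
    set b := Real.sqrt (lam2 x)
    have ha : a ^ 2 = lam1 x := Real.sq_sqrt hl1
    have hb : b ^ 2 = lam2 x := Real.sq_sqrt hl2
    have happ : ∀ j : Fin (k+1), (a • c1 x + b • c2 x) j
        = a * (if j = 0 then 1/2 else x j / (2 * tnorm x)) + b * (if j = 0 then 1/2 else -x j / (2 * tnorm x)) := by
      intro j; simp [c1, c2, mk]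
    rw [happ, happ]
    simp only [if_pos rfl, if_neg (Fin.succ_ne_zero i), eq_self_iff_true, if_true]
    have hlam : lam1 x - lam2 x = 2 * tnorm x := by unfold lam1 lam2; ring
    have h2t : (2 * tnorm x) ≠ 0 := by positivity
    have key : 2 * (a * (1/2) + b * (1/2)) * (a * (x i.succ / (2 * tnorm x)) + b * (-x i.succ / (2 * tnorm x)))
        = (a ^ 2 - b ^ 2) * x i.succ / (2 * tnorm x) := by ring
    rw [key, ha, hb, hlam, mul_comm (2 * tnorm x), mul_div_assoc, div_self h2t, mul_one]

lemma Tmat_row0 {k : ℕ} (x s : E k) (h : tnorm x < x 0) :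
    mulVecE (Tmat x) s 0 = ∑ j, x j * s j := by
  set y := jsqrt x with hy
  have hQ : ∀ j : Fin (k+1), Tmat x 0 j = if j = 0 then ∑ m, y m ^ 2 else 2 * y 0 * y j := by
    intro j
    have hArw : ∀ a b : Fin (k+1), ∀ z : E k, Arw z a b =
        (if a = 0 then z b else if b = 0 then z a else if a = b then z 0 else 0) := fun _ _ _ => rfl
    have hmul : (Arw y * Arw y) 0 j = ∑ m, y m * Arw y m j := by
      rw [Matrix.mul_apply]
      apply Finset.sum_congr rfl; intro m _; rw [hArw 0 m y, if_pos rfl]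
    have hjm : ∀ j : Fin (k+1), jmul y y j = if j = 0 then ∑ i, y i * y i else 2 * (y 0 * y j) := by
      intro j; show (if j = 0 then ∑ i, y i * y i else y 0 * y j + y 0 * y j) = _
      split <;> ring
    show ((2 : ℝ) • (Arw y * Arw y) - Arw (jmul y y)) 0 j = _
    rw [Matrix.sub_apply, Matrix.smul_apply, hmul, hArw 0 j, if_pos rfl, hjm]
    rcases Fin.eq_zero_or_eq_succ j with rfl | ⟨i, rfl⟩
    · rw [if_pos rfl, if_pos rfl]
      have : ∀ m : Fin (k+1), y m * Arw y m 0 = y m ^ 2 := by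
        intro m; rw [hArw]
        rcases Fin.eq_zero_or_eq_succ m with rfl | ⟨i, rfl⟩
        · simp; ring
        · rw [if_neg (Fin.succ_ne_zero i), if_pos rfl]; ring
      simp only [this]
      have : ∑ i, y i * y i = ∑ i, y i ^ 2 := by apply Finset.sum_congr rfl; intro i _; ring
      rw [this, smul_eq_mul]; ring
    · rw [if_neg (Fin.succ_ne_zero i), if_neg (Fin.succ_ne_zero i)]
      have : ∑ m, y m * Arw y m i.succ = 2 * (y 0 * y i.succ) := by
        rw [Fin.sum_univ_succ]
        have h0 : Arw y 0 i.succ = y i.succ := by rw [hArw, if_pos rfl]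
        have hm : ∀ m : Fin k, y m.succ * Arw y m.succ i.succ
            = if m = i then y i.succ * y 0 else 0 := by
          intro m; rw [hArw, if_neg (Fin.succ_ne_zero m), if_neg (Fin.succ_ne_zero i)]
          by_cases hmi : m = i
          · subst hmi; rw [if_pos rfl, if_pos rfl]
          · rw [if_neg (fun hc => hmi (Fin.succ_injective _ hc)), if_neg hmi, mul_zero]
        simp only [hm, h0, Finset.sum_ite_eq' Finset.univ, Finset.mem_univ, if_pos]
        ring
      rw [this, smul_eq_mul]; ring
  show ((Tmat x).mulVec (WithLp.equiv 2 _ s)) 0 = _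
  rw [Matrix.mulVec, dotProduct]
  have : ∀ j, Tmat x 0 j * (WithLp.equiv 2 _ s) j = (if j = 0 then ∑ m, y m ^ 2 else 2 * y 0 * y j) * s j := by
    intro j; rw [hQ j]; rfl
  simp only [this]
  rw [Fin.sum_univ_succ, Fin.sum_univ_succ (f := fun j => x j * s j)]
  rw [if_pos rfl, jsqrt_sq_sum x h]
  congr 1
  apply Finset.sum_congr rfl; intro i _
  rw [if_neg (Fin.succ_ne_zero i), jsqrt_tail x h i]

/-- For strictly feasible block vectors `x, s` of rank `r` and `ν > 0`,
`|xᵀs − rν| ≤ √(r/2) · d(x, s, ν)`. -/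
theorem gap_vs_central_path_distance {r : ℕ} {d : Fin r → ℕ} (hr : 0 < r)
    (x s : BV d) (hx : inIntLB x) (hs : inIntLB s) (ν : ℝ) (hν : 0 < ν) :
    |ip x s - r * ν| ≤ Real.sqrt (r / 2) * cdist x s ν := by
  classical
  set w : BV d := TB x s - ν • (idB : BV d) with hw
  have hw0 : ∀ i, w i 0 = (∑ j, x i j * s i j) - ν := by
    intro i
    have h1 : w i 0 = TB x s i 0 - ν * (idB : BV d) i 0 := rfl
    have h3 : TB x s i 0 = ∑ j, x i j * s i j := Tmat_row0 (x i) (s i) (hx i)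
    have h2 : (idB : BV d) i 0 = 1 := rfl
    rw [h1, h3, h2, mul_one]
  have hsum : ∑ i, w i 0 = ip x s - r * ν := by
    simp only [hw0]
    rw [Finset.sum_sub_distrib, Finset.sum_const, Finset.card_univ, Fintype.card_fin,
      nsmul_eq_mul, ip]
  set S := ∑ i, (lam1 (w i) ^ 2 + lam2 (w i) ^ 2) with hS
  have hS0 : 0 ≤ S := Finset.sum_nonneg (fun i _ => by positivity)
  have h1 : (∑ i, w i 0) ^ 2 ≤ (r : ℝ) * ∑ i, (w i 0) ^ 2 := by
    have := sq_sum_le_card_mul_sum_sq (s := (Finset.univ : Finset (Fin r)))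
      (f := fun i => w i 0)
    simpa using this
  have h2 : (2 : ℝ) * ∑ i, (w i 0) ^ 2 ≤ S := by
    rw [Finset.mul_sum, hS]
    apply Finset.sum_le_sum; intro i _
    have := tnorm_nonneg (w i)
    unfold lam1 lam2; nlinarith [sq_nonneg (tnorm (w i))]
  have hkey : (∑ i, w i 0) ^ 2 ≤ ((r : ℝ) / 2) * S := by
    calc (∑ i, w i 0) ^ 2 ≤ (r : ℝ) * ∑ i, (w i 0) ^ 2 := h1
      _ = ((r : ℝ) / 2) * (2 * ∑ i, (w i 0) ^ 2) := by ring
      _ ≤ ((r : ℝ) / 2) * S := by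
          apply mul_le_mul_of_nonneg_left h2; positivity
  have hc : cdist x s ν = Real.sqrt S := rfl
  have habs : |ip x s - r * ν| ≤ Real.sqrt (((r : ℝ) / 2) * S) := by
    rw [← hsum, ← Real.sqrt_sq_eq_abs]
    exact Real.sqrt_le_sqrt hkey
  calc |ip x s - r * ν| ≤ Real.sqrt (((r : ℝ) / 2) * S) := habs
    _ = Real.sqrt ((r : ℝ) / 2) * Real.sqrt S := Real.sqrt_mul (by positivity) S
    _ = Real.sqrt ((r : ℝ) / 2) * cdist x s ν := by rw [hc]


end SOCP
end
end

section
/- (Preservation of strict feasibility under approximate Newton steps.) Let η = χ = 0.01, ξ = 0.001, and Θ := √(2η² + 4χ²)/(1 − 3η). Let s, Δx, Δs, Δ̂x, Δ̂s be block vectors of rank r (same block structure) such that ‖s − e‖_F ≤ η, ‖Δx‖_F ≤ Θ/√2, ‖Δs‖_F ≤ √2·Θ, ‖Δ̂x − Δx‖_F ≤ ξ, and ‖Δ̂s − Δs‖_F ≤ ξ. Then λ_min(e + Δ̂x) ≥ 0.8 and λ_min(s + Δ̂s) ≥ 0.8; in particular, e + Δ̂x ∈ int 𝓛 and s + Δ̂s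 ∈ int 𝓛. -/
set_option synthInstance.maxHeartbeats 1000000
set_option maxHeartbeats 1000000

noncomputable section
open scoped BigOperators

namespace SOCP

variable {r : ℕ} {d : Fin r → ℕ}

lemma E_add_apply {k : ℕ} (u v : E k) (j : Fin (k+1)) : (u + v) j = u j + v j := rfl

lemma tnorm_eq_norm {k : ℕ} (x : E k) :
    tnorm x = ‖((WithLp.equiv 2 (Fin k → ℝ)).symm (fun i => x i.succ) : EuclideanSpace ℝ (Fin k))‖ := by
  rw [EuclideanSpace.norm_eq]
  simp [tnorm, WithLp.equiv_symm_apply, PiLp.toLp_apply, sq_abs]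

lemma tnorm_add_le {k : ℕ} (u v : E k) : tnorm (u + v) ≤ tnorm u + tnorm v := by
  rw [tnorm_eq_norm, tnorm_eq_norm, tnorm_eq_norm]
  have h : ((WithLp.equiv 2 (Fin k → ℝ)).symm (fun i => (u + v) i.succ) : EuclideanSpace ℝ (Fin k))
      = ((WithLp.equiv 2 (Fin k → ℝ)).symm (fun i => u i.succ) : EuclideanSpace ℝ (Fin k))
        + (WithLp.equiv 2 (Fin k → ℝ)).symm (fun i => v i.succ) := by
    ext i
    simp [WithLp.equiv_symm_apply, PiLp.toLp_apply, E_add_apply]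
  rw [h]
  exact norm_add_le _ _

lemma spec_add_le {k : ℕ} (u v : E k) :
    |(u + v) 0| + tnorm (u + v) ≤ (|u 0| + tnorm u) + (|v 0| + tnorm v) := by
  have h1 : |(u + v) 0| ≤ |u 0| + |v 0| := by rw [E_add_apply]; exact abs_add_le _ _
  have h2 := tnorm_add_le u v
  linarith

lemma block_le_frob {r : ℕ} {d : Fin r → ℕ} (x : BV d) (i : Fin r) :
    |x i 0| + tnorm (x i) ≤ frobNorm x := by
  have hb := tnorm_nonneg (x i)
  have h1 : (|x i 0| + tnorm (x i))^2 ≤ lam1 (x i)^2 + lam2 (x i)^2 := by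
    simp only [lam1, lam2]
    nlinarith [sq_abs (x i 0), abs_nonneg (x i 0), sq_nonneg (|x i 0| - tnorm (x i))]
  have h2 : lam1 (x i)^2 + lam2 (x i)^2 ≤ ∑ j, (lam1 (x j)^2 + lam2 (x j)^2) :=
    Finset.single_le_sum (f := fun j => lam1 (x j)^2 + lam2 (x j)^2)
      (fun j _ => by positivity) (Finset.mem_univ i)
  have h3 : |x i 0| + tnorm (x i) = Real.sqrt ((|x i 0| + tnorm (x i))^2) :=
    (Real.sqrt_sq (by positivity)).symm
  rw [h3, frobNorm]
  exact Real.sqrt_le_sqrt (h1.trans h2)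

lemma tnorm_idE {k : ℕ} : tnorm (idE : E k) = 0 := by
  have : ∀ i : Fin k, ((idE : E k) i.succ) ^ 2 = 0 := by
    intro i
    simp [idE, mk, WithLp.equiv_symm_apply, PiLp.toLp_apply, Fin.succ_ne_zero]
  simp [tnorm, this]

lemma idE_zero {k : ℕ} : (idE : E k) 0 = 1 := by
  simp [idE, mk, WithLp.equiv_symm_apply, PiLp.toLp_apply]

/-- Preservation of strict feasibility under approximate Newton steps,
with `η = χ = 0.01`, `ξ = 0.001` and `Θ = √(2η² + 4χ²)/(1 − 3η)`. -/
theorem strict_feasibility_preserved {r : ℕ} {d : Fin r → ℕ} (hr : 0 < r)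
    (s dx ds dx' ds' : BV d) (Θ : ℝ)
    (hΘ : Θ = Real.sqrt (2 * 0.01 ^ 2 + 4 * 0.01 ^ 2) / (1 - 3 * 0.01))
    (hs : frobNorm (s - idB) ≤ 0.01)
    (hdx : frobNorm dx ≤ Θ / Real.sqrt 2)
    (hds : frobNorm ds ≤ Real.sqrt 2 * Θ)
    (hdx' : frobNorm (dx' - dx) ≤ 0.001)
    (hds' : frobNorm (ds' - ds) ≤ 0.001) :
    (0.8 ≤ lamMin (idB + dx') ∧ 0.8 ≤ lamMin (s + ds')) ∧
    (inIntLB (idB + dx') ∧ inIntLB (s + ds')) := by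
  haveI : Nonempty (Fin r) := ⟨⟨0, hr⟩⟩
  -- numeric bounds on Θ
  have hsqrt6 : Real.sqrt (2 * 0.01 ^ 2 + 4 * 0.01 ^ 2) ≤ 0.025 := by
    rw [show (2 * 0.01 ^ 2 + 4 * 0.01 ^ 2 : ℝ) = 0.0006 by norm_num]
    calc Real.sqrt 0.0006 ≤ Real.sqrt ((0.025 : ℝ)^2) := Real.sqrt_le_sqrt (by norm_num)
      _ = 0.025 := Real.sqrt_sq (by norm_num)
  have hΘ0 : 0 ≤ Θ := by rw [hΘ]; positivity
  have hΘle : Θ ≤ 0.026 := by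
    rw [hΘ, div_le_iff₀ (by norm_num : (0:ℝ) < 1 - 3 * 0.01)]
    calc Real.sqrt (2 * 0.01 ^ 2 + 4 * 0.01 ^ 2) ≤ 0.025 := hsqrt6
      _ ≤ 0.026 * (1 - 3 * 0.01) := by norm_num
  have hs2 : (1:ℝ) ≤ Real.sqrt 2 := by
    rw [show (1:ℝ) = Real.sqrt 1 by simp]
    exact Real.sqrt_le_sqrt (by norm_num)
  have hs2' : Real.sqrt 2 ≤ 1.5 := by
    calc Real.sqrt 2 ≤ Real.sqrt ((1.5:ℝ)^2) := Real.sqrt_le_sqrt (by norm_num)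
      _ = 1.5 := Real.sqrt_sq (by norm_num)
  have hdx1 : frobNorm dx ≤ 0.026 :=
    le_trans hdx (le_trans (div_le_self hΘ0 hs2) hΘle)
  have hds1 : frobNorm ds ≤ 0.039 := by
    have h := mul_le_mul hs2' hΘle hΘ0 (by norm_num : (0:ℝ) ≤ 1.5)
    calc frobNorm ds ≤ Real.sqrt 2 * Θ := hds
      _ ≤ 1.5 * 0.026 := h
      _ ≤ 0.039 := by norm_num
  -- blockwise bounds
  have hdx'b : ∀ i, |dx' i 0| + tnorm (dx' i) ≤ 0.027 := by
    intro i
    have heq : dx' i = dx i + (dx' - dx) i := by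
      show dx' i = dx i + (dx' i - dx i); abel
    calc |dx' i 0| + tnorm (dx' i)
        ≤ (|dx i 0| + tnorm (dx i)) + (|(dx' - dx) i 0| + tnorm ((dx' - dx) i)) := by
          rw [heq]; exact spec_add_le _ _
      _ ≤ frobNorm dx + frobNorm (dx' - dx) :=
          add_le_add (block_le_frob dx i) (block_le_frob (dx' - dx) i)
      _ ≤ 0.027 := by linarith
  have hds'b : ∀ i, |ds' i 0| + tnorm (ds' i) ≤ 0.040 := by
    intro i
    have heq : ds' i = ds i + (ds' - ds) i := by
      show ds' i = ds i + (ds' i - ds i); abel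
    calc |ds' i 0| + tnorm (ds' i)
        ≤ (|ds i 0| + tnorm (ds i)) + (|(ds' - ds) i 0| + tnorm ((ds' - ds) i)) := by
          rw [heq]; exact spec_add_le _ _
      _ ≤ frobNorm ds + frobNorm (ds' - ds) :=
          add_le_add (block_le_frob ds i) (block_le_frob (ds' - ds) i)
      _ ≤ 0.040 := by linarith
  -- lam2 bounds for e + dx'
  have hA : ∀ i, (0.8:ℝ) ≤ lam2 ((idB (d := d) + dx') i) := by
    intro i
    have e1 : (idB (d := d) + dx') i = idE + dx' i := by
      simp only [Pi.add_apply, idB]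
    have h1 : tnorm ((idB (d := d) + dx') i) ≤ tnorm (dx' i) := by
      rw [e1]
      have h := tnorm_add_le (idE : E (d i + 1)) (dx' i)
      rw [tnorm_idE] at h
      linarith
    have h0 : ((idB (d := d) + dx') i) 0 = 1 + dx' i 0 := by
      rw [e1, E_add_apply, idE_zero]
    have hb := hdx'b i
    have hge : -(|dx' i 0|) ≤ dx' i 0 := neg_abs_le _
    simp only [lam2]
    rw [h0]
    linarith [tnorm_nonneg (dx' i)]
  -- lam2 bounds for s + ds'
  have hsb : ∀ i, (0.99:ℝ) ≤ lam2 (s i) := by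
    intro i
    have heq : s i = idE + (s - idB (d := d)) i := by
      show s i = idE + (s i - idE); abel
    have h1 : tnorm (s i) ≤ tnorm ((s - idB (d := d)) i) := by
      rw [heq]
      have h := tnorm_add_le (idE : E (d i + 1)) ((s - idB (d := d)) i)
      rw [tnorm_idE] at h
      linarith
    have h0 : s i 0 = 1 + (s - idB (d := d)) i 0 := by
      rw [heq, E_add_apply, idE_zero]
    have hb := (block_le_frob (s - idB (d := d)) i).trans hs
    have hge : -(|(s - idB (d := d)) i 0|) ≤ (s - idB (d := d)) i 0 := neg_abs_le _
    simp only [lam2]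
    rw [h0]
    linarith [tnorm_nonneg ((s - idB (d := d)) i)]
  have hB : ∀ i, (0.8:ℝ) ≤ lam2 ((s + ds') i) := by
    intro i
    have h1 : tnorm ((s + ds') i) ≤ tnorm (s i) + tnorm (ds' i) := by
      rw [Pi.add_apply]; exact tnorm_add_le _ _
    have h0 : ((s + ds') i) 0 = s i 0 + ds' i 0 := by
      rw [Pi.add_apply, E_add_apply]
    have hb := hds'b i
    have hge : -(|ds' i 0|) ≤ ds' i 0 := neg_abs_le _
    have hsi := hsb i
    simp only [lam2] at hsi ⊢
    rw [h0]
    linarith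
  have hA' : (0.8:ℝ) ≤ lamMin (idB (d := d) + dx') := le_ciInf hA
  have hB' : (0.8:ℝ) ≤ lamMin (s + ds') := le_ciInf hB
  refine ⟨⟨hA', hB'⟩, ?_, ?_⟩
  · intro i
    have h := hA i
    simp only [lam2] at h
    linarith
  · intro i
    have h := hB i
    simp only [lam2] at h
    linarith


end SOCP
end
end
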